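/- If M is an invariant submanifold (J maps tangent vectors to tangent vectors) of a locally metallic Riemannian manifold, then the induced tensor P is parallel: ∇P = 0. -/
import Mathlib


/-- If `M` is an invariant submanifold (`J` maps tangent vectors to tangent vectors, i.e.
`J(ιX) = ι(PX)`) of a locally metallic Riemannian manifold, then the induced tensor `P` is
parallel: `∇P = 0`.  The induced metric `gbar(ι·, ι·)` is assumed nondegenerate. -/
theorem invariant_submanifold_P_parallel
    {R : Type*} [CommRing R] [Algebra ℝ R]
    {T W : Type*} [AddCommGroup T] [Module R T] [AddCommGroup W] [Module R W]
    (p q : ℝ) (hp : 0 < p) (hq : 0 < q)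
    -- the immersion of tangent fields into ambient fields along M, and the tangential projection
    (ι : T →ₗ[R] W) (π : W →ₗ[R] T) (hπι : ∀ x, π (ι x) = x)
    -- the ambient metric, the metallic structure J and its compatibility with the metric
    (gbar : W →ₗ[R] W →ₗ[R] R) (hgsym : ∀ v w, gbar v w = gbar w v)
    (J : W →ₗ[R] W)
    (hJ2 : ∀ v, J (J v) = algebraMap ℝ R p • J v + algebraMap ℝ R q • v)
    (hJcompat : ∀ v w, gbar (J v) w = gbar v (J w))
    -- an orthonormal normal frame
    (r : ℕ) (N : Fin r → W)
    (hON : ∀ α β, gbar (N α) (N β) = if α = β then 1 else 0)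
    (hNperp : ∀ α x, gbar (N α) (ι x) = 0)
    (hπN : ∀ α, π (N α) = 0)
    -- vector fields act on functions as derivations; ambient and induced connections
    (D : T → Derivation ℝ R R)
    (nabbar : T → W → W) (nab : T → T → T)
    (hadd : ∀ X v w, nabbar X (v + w) = nabbar X v + nabbar X w)
    (hLeib : ∀ X (f : R) v, nabbar X (f • v) = D X f • v + f • nabbar X v)
    -- J is parallel: the ambient manifold is locally metallic
    (hJpar : ∀ X v, nabbar X (J v) = J (nabbar X v))
    -- Gauss and Weingarten formulas
    (h : Fin r → T → T → R) (A : Fin r → T → T) (l : Fin r → Fin r → T → R)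
    (hGauss : ∀ X Y, nabbar X (ι Y) = ι (nab X Y) + ∑ α, h α X Y • N α)
    (hWein : ∀ X α, nabbar X (N α) = - ι (A α X) + ∑ β, l α β X • N β)
    -- the induced Σ-structure
    (P : T → T) (u : Fin r → T → R) (ξ : Fin r → T) (a : Fin r → Fin r → R)
    (hdecT : ∀ X, J (ι X) = ι (P X) + ∑ α, u α X • N α)
    (hdecN : ∀ α, J (N α) = ι (ξ α) + ∑ β, a α β • N β)
    (hgnd : ∀ X : T, (∀ Y : T, gbar (ι X) (ι Y) = 0) → X = 0)
    (hinv : ∀ X, J (ι X) = ι (P X)) :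
    ∀ X Y, nab X (P Y) = P (nab X Y) := by
  have hxi : ∀ α, ξ α = 0 := by
    intro α
    apply hgnd
    intro Y
    have h2 : gbar (J (N α)) (ι Y) = 0 := by
      rw [hJcompat, hinv]; exact hNperp _ _
    have h3 : gbar (J (N α)) (ι Y)
        = gbar (ι (ξ α)) (ι Y) + ∑ β, a α β * gbar (N β) (ι Y) := by
      rw [hdecN]
      simp [smul_eq_mul]
    rw [h2] at h3
    have h4 : (0:R) = gbar (ι (ξ α)) (ι Y) := by
      rw [h3]; simp [hNperp]
    exact h4.symm
  intro X Y
  have key : ι (nab X (P Y)) + ∑ α, h α X (P Y) • N α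
      = ι (P (nab X Y)) + ∑ α, h α X Y • J (N α) := by
    calc ι (nab X (P Y)) + ∑ α, h α X (P Y) • N α
        = nabbar X (ι (P Y)) := (hGauss X (P Y)).symm
      _ = nabbar X (J (ι Y)) := by rw [hinv]
      _ = J (nabbar X (ι Y)) := hJpar X (ι Y)
      _ = J (ι (nab X Y) + ∑ α, h α X Y • N α) := by rw [hGauss]
      _ = ι (P (nab X Y)) + ∑ α, h α X Y • J (N α) := by
          rw [map_add, map_sum]
          simp [map_smul, hinv]
  have hk := congrArg π key
  simpa [map_add, map_sum, map_smul, hπι, hπN, hdecN, hxi] using hk
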